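/- The λ_CL term O := λx λy ((if x then T else efq(ā⟨F,s⟩)) ∥_a (if y then T else a π₀)) is a parallel OR: O F F reduces to F, O u T reduces to T, and O T u reduces to T for every term u : Bool. -/

import Mathlib

/-- Formulas/types of λ_CL extended with a base type Bool. -/
inductive FormulaB : Type where
  | bool : FormulaB
  | atom : Nat → FormulaB
  | bot  : FormulaB
  | imp  : FormulaB → FormulaB → FormulaB
  | conj : FormulaB → FormulaB → FormulaB
deriving DecidableEq

/-- λ_CL terms (de Bruijn) with booleans T, F and if-then-else, and the
parallel operator `parC A u v` (u ∥ₐ v, binding channel variable 0 of type ¬A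
in u and A in v) and `par u v` (u ∥ v). -/
inductive TermB : Type where
  | var : Nat → TermB
  | lam : FormulaB → TermB → TermB
  | app : TermB → TermB → TermB
  | pair : TermB → TermB → TermB
  | proj : Bool → TermB → TermB
  | efq : FormulaB → TermB → TermB
  | tt : TermB
  | ff : TermB
  | ite : TermB → TermB → TermB → TermB
  | parC : FormulaB → TermB → TermB → TermB
  | par : TermB → TermB → TermB
deriving DecidableEq

def liftF (f : Nat → Nat) : Nat → Nat
  | 0 => 0
  | n+1 => f n + 1

def TermB.rename (f : Nat → Nat) : TermB → TermB
  | .var n => .var (f n)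
  | .lam A t => .lam A (t.rename (liftF f))
  | .app t u => .app (t.rename f) (u.rename f)
  | .pair t u => .pair (t.rename f) (u.rename f)
  | .proj b t => .proj b (t.rename f)
  | .efq A t => .efq A (t.rename f)
  | .tt => .tt
  | .ff => .ff
  | .ite c s t => .ite (c.rename f) (s.rename f) (t.rename f)
  | .parC A u v => .parC A (u.rename (liftF f)) (v.rename (liftF f))
  | .par u v => .par (u.rename f) (v.rename f)

def TermB.subst (k : Nat) (s : TermB) : TermB → TermB
  | .var n => if n = k then s else if k < n then .var (n-1) else .var n
  | .lam A t => .lam A (TermB.subst (k+1) (s.rename Nat.succ) t)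
  | .app t u => .app (TermB.subst k s t) (TermB.subst k s u)
  | .pair t u => .pair (TermB.subst k s t) (TermB.subst k s u)
  | .proj b t => .proj b (TermB.subst k s t)
  | .efq A t => .efq A (TermB.subst k s t)
  | .tt => .tt
  | .ff => .ff
  | .ite c a b => .ite (TermB.subst k s c) (TermB.subst k s a) (TermB.subst k s b)
  | .parC A u v => .parC A (TermB.subst (k+1) (s.rename Nat.succ) u)
      (TermB.subst (k+1) (s.rename Nat.succ) v)
  | .par u v => .par (TermB.subst k s u) (TermB.subst k s v)

def freeInB (n : Nat) : TermB → Bool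
  | .var m => m == n
  | .lam _ t => freeInB (n+1) t
  | .app t u => freeInB n t || freeInB n u
  | .pair t u => freeInB n t || freeInB n u
  | .proj _ t => freeInB n t
  | .efq _ t => freeInB n t
  | .tt => false
  | .ff => false
  | .ite c s t => freeInB n c || freeInB n s || freeInB n t
  | .parC _ u v => freeInB (n+1) u || freeInB (n+1) v
  | .par u v => freeInB n u || freeInB n v

inductive TypingB : List FormulaB → TermB → FormulaB → Prop where
  | var : Γ[n]? = some A → TypingB Γ (.var n) A
  | lam : TypingB (A::Γ) t B → TypingB Γ (.lam A t) (.imp A B)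
  | app : TypingB Γ t (.imp A B) → TypingB Γ u A → TypingB Γ (.app t u) B
  | pair : TypingB Γ t A → TypingB Γ u B → TypingB Γ (.pair t u) (.conj A B)
  | projL : TypingB Γ t (.conj A B) → TypingB Γ (.proj false t) A
  | projR : TypingB Γ t (.conj A B) → TypingB Γ (.proj true t) B
  | efq : TypingB Γ t .bot → TypingB Γ (.efq P t) P
  | tt : TypingB Γ .tt .bool
  | ff : TypingB Γ .ff .bool
  | ite : TypingB Γ c .bool → TypingB Γ s A → TypingB Γ t A →
      TypingB Γ (.ite c s t) A
  | parC : TypingB (.imp A .bot :: Γ) u C → TypingB (A :: Γ) v C →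
      TypingB Γ (.parC A u v) C
  | par : TypingB Γ u A → TypingB Γ v A → TypingB Γ (.par u v) A

/-- One-hole contexts. -/
inductive CtxB : Type where
  | hole : CtxB
  | lam : FormulaB → CtxB → CtxB
  | appL : CtxB → TermB → CtxB
  | appR : TermB → CtxB → CtxB
  | pairL : CtxB → TermB → CtxB
  | pairR : TermB → CtxB → CtxB
  | proj : Bool → CtxB → CtxB
  | efq : FormulaB → CtxB → CtxB
  | iteC : CtxB → TermB → TermB → CtxB
  | iteL : TermB → CtxB → TermB → CtxB
  | iteR : TermB → TermB → CtxB → CtxB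
  | parCL : FormulaB → CtxB → TermB → CtxB
  | parCR : FormulaB → TermB → CtxB → CtxB
  | parL : CtxB → TermB → CtxB
  | parR : TermB → CtxB → CtxB

def CtxB.fill : CtxB → TermB → TermB
  | .hole, t => t
  | .lam A c, t => .lam A (c.fill t)
  | .appL c u, t => .app (c.fill t) u
  | .appR u c, t => .app u (c.fill t)
  | .pairL c u, t => .pair (c.fill t) u
  | .pairR u c, t => .pair u (c.fill t)
  | .proj b c, t => .proj b (c.fill t)
  | .efq A c, t => .efq A (c.fill t)
  | .iteC c a b, t => .ite (c.fill t) a b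
  | .iteL a c b, t => .ite a (c.fill t) b
  | .iteR a b c, t => .ite a b (c.fill t)
  | .parCL A c u, t => .parC A (c.fill t) u
  | .parCR A u c, t => .parC A u (c.fill t)
  | .parL c u, t => .par (c.fill t) u
  | .parR u c, t => .par u (c.fill t)

/-- Number of binders above the hole. -/
def CtxB.depth : CtxB → Nat
  | .hole => 0
  | .lam _ c => c.depth + 1
  | .appL c _ => c.depth
  | .appR _ c => c.depth
  | .pairL c _ => c.depth
  | .pairR _ c => c.depth
  | .proj _ c => c.depth
  | .efq _ c => c.depth
  | .iteC c _ _ => c.depth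
  | .iteL _ c _ => c.depth
  | .iteR _ _ c => c.depth
  | .parCL _ c _ => c.depth + 1
  | .parCR _ _ c => c.depth + 1
  | .parL c _ => c.depth
  | .parR _ c => c.depth

/-- Reduction for λ_CL with booleans: β, projections, if-then-else reductions,
basic cross reductions C[ā u] ∥ₐ D ↦ D[u/a] and the simplifications
u ∥ₐ v ↦ u (a ∉ u), u ∥ₐ v ↦ v (a ∉ v), closed under all term constructors. -/
inductive RedB : TermB → TermB → Prop where
  | beta : RedB (.app (.lam A t) u) (TermB.subst 0 u t)
  | projL : RedB (.proj false (.pair t u)) t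
  | projR : RedB (.proj true (.pair t u)) u
  | iteT : RedB (.ite .tt s t) s
  | iteF : RedB (.ite .ff s t) t
  | basicCross : ∀ (C : CtxB) (u D : TermB),
      (∀ n, n ≤ C.depth → freeInB n u = false) →
      RedB (.parC B (C.fill (.app (.var C.depth) u)) D)
        (TermB.subst 0 (u.rename (fun n => n - (C.depth + 1))) D)
  | simpL : freeInB 0 u = false →
      RedB (.parC B u v) (TermB.subst 0 (.var 0) u)
  | simpR : freeInB 0 v = false →
      RedB (.parC B u v) (TermB.subst 0 (.var 0) v)
  | lam : RedB t t' → RedB (.lam A t) (.lam A t')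
  | appL : RedB t t' → RedB (.app t u) (.app t' u)
  | appR : RedB u u' → RedB (.app t u) (.app t u')
  | pairL : RedB t t' → RedB (.pair t u) (.pair t' u)
  | pairR : RedB u u' → RedB (.pair t u) (.pair t u')
  | proj : RedB t t' → RedB (.proj b t) (.proj b t')
  | efq : RedB t t' → RedB (.efq A t) (.efq A t')
  | iteC : RedB c c' → RedB (.ite c s t) (.ite c' s t)
  | iteL : RedB s s' → RedB (.ite c s t) (.ite c s' t)
  | iteR : RedB t t' → RedB (.ite c s t) (.ite c s t')
  | parCL : RedB u u' → RedB (.parC A u v) (.parC A u' v)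
  | parCR : RedB v v' → RedB (.parC A u v) (.parC A u v')
  | parL : RedB u u' → RedB (.par u v) (.par u' v)
  | parR : RedB v v' → RedB (.par u v) (.par u v')

/-- The parallel OR:
O := λx λy ((if x then T else efq (ā⟨F,s⟩)) ∥ₐ (if y then T else a π₀)). -/
def parallelOr (S : FormulaB) (s : TermB) : TermB :=
  .lam .bool (.lam .bool (.parC (.conj .bool S)
    (.ite (.var 2) .tt (.efq .bool (.app (.var 0) (.pair .ff s))))
    (.ite (.var 1) .tt (.proj false (.var 0)))))

lemma typed_free {Γ t A} (h : TypingB Γ t A) :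
    ∀ n, Γ.length ≤ n → freeInB n t = false := by
  induction h with
  | var hm =>
    intro n hn
    rename_i Γ m A
    have hm' : m < Γ.length := by
      by_contra hc
      rw [List.getElem?_eq_none (by omega)] at hm
      cases hm
    simp [freeInB]; omega
  | lam _ ih => intro n hn; exact ih (n+1) (by simpa using hn)
  | app _ _ ih1 ih2 => intro n hn; simp [freeInB, ih1 n hn, ih2 n hn]
  | pair _ _ ih1 ih2 => intro n hn; simp [freeInB, ih1 n hn, ih2 n hn]
  | projL _ ih => intro n hn; simp [freeInB, ih n hn]
  | projR _ ih => intro n hn; simp [freeInB, ih n hn]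
  | efq _ ih => intro n hn; simp [freeInB, ih n hn]
  | tt => intro n hn; simp [freeInB]
  | ff => intro n hn; simp [freeInB]
  | ite _ _ _ ih1 ih2 ih3 =>
    intro n hn; simp [freeInB, ih1 n hn, ih2 n hn, ih3 n hn]
  | parC _ _ ih1 ih2 =>
    intro n hn
    simp [freeInB, ih1 (n+1) (by simpa using hn), ih2 (n+1) (by simpa using hn)]
  | par _ _ ih1 ih2 => intro n hn; simp [freeInB, ih1 n hn, ih2 n hn]

lemma rename_id (t : TermB) : ∀ (k : Nat) (f : Nat → Nat),
    (∀ n, n < k → f n = n) → (∀ n, k ≤ n → freeInB n t = false) →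
    t.rename f = t := by
  induction t with
  | var m =>
    intro k f hf ht
    have : m < k := by
      by_contra hc
      have := ht m (by omega); simp [freeInB] at this
    simp [TermB.rename, hf m this]
  | lam A t ih =>
    intro k f hf ht
    simp only [TermB.rename]
    rw [ih (k+1) (liftF f) (fun n hn => by
        cases n with
        | zero => rfl
        | succ n => simp [liftF, hf n (by omega)])
      (fun n hn => by
        cases n with
        | zero => omega
        | succ n => exact ht n (by omega))]
  | app a b iha ihb =>
    intro k f hf ht
    simp only [TermB.rename]
    rw [iha k f hf (fun n hn => by have := ht n hn; simp [freeInB] at this; simp [this]),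
      ihb k f hf (fun n hn => by have := ht n hn; simp [freeInB] at this; simp [this])]
  | pair a b iha ihb =>
    intro k f hf ht
    simp only [TermB.rename]
    rw [iha k f hf (fun n hn => by have := ht n hn; simp [freeInB] at this; simp [this]),
      ihb k f hf (fun n hn => by have := ht n hn; simp [freeInB] at this; simp [this])]
  | proj b t ih =>
    intro k f hf ht
    simp only [TermB.rename]
    rw [ih k f hf (fun n hn => by have := ht n hn; simpa [freeInB] using this)]
  | efq A t ih =>
    intro k f hf ht
    simp only [TermB.rename]
    rw [ih k f hf (fun n hn => by have := ht n hn; simpa [freeInB] using this)]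
  | tt => intros; rfl
  | ff => intros; rfl
  | ite c a b ihc iha ihb =>
    intro k f hf ht
    simp only [TermB.rename]
    rw [ihc k f hf (fun n hn => by have := ht n hn; simp [freeInB] at this; simp [this]),
      iha k f hf (fun n hn => by have := ht n hn; simp [freeInB] at this; simp [this]),
      ihb k f hf (fun n hn => by have := ht n hn; simp [freeInB] at this; simp [this])]
  | parC A a b iha ihb =>
    intro k f hf ht
    have hlf : ∀ n, n < k+1 → liftF f n = n := fun n hn => by
      cases n with
      | zero => rfl
      | succ n => simp [liftF, hf n (by omega)]
    simp only [TermB.rename]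
    rw [iha (k+1) (liftF f) hlf (fun n hn => by
        cases n with
        | zero => omega
        | succ n => have := ht n (by omega); simp [freeInB] at this; simp [this]),
      ihb (k+1) (liftF f) hlf (fun n hn => by
        cases n with
        | zero => omega
        | succ n => have := ht n (by omega); simp [freeInB] at this; simp [this])]
  | par a b iha ihb =>
    intro k f hf ht
    simp only [TermB.rename]
    rw [iha k f hf (fun n hn => by have := ht n hn; simp [freeInB] at this; simp [this]),
      ihb k f hf (fun n hn => by have := ht n hn; simp [freeInB] at this; simp [this])]

lemma subst_id (t : TermB) : ∀ (k j : Nat) (u : TermB), k ≤ j →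
    (∀ n, k ≤ n → freeInB n t = false) →
    TermB.subst j u t = t := by
  induction t with
  | var m =>
    intro k j u hj ht
    have : m < k := by
      by_contra hc
      have := ht m (by omega); simp [freeInB] at this
    have h1 : ¬ (m = j) := by omega
    have h2 : ¬ (j < m) := by omega
    simp [TermB.subst, h1, h2]
  | lam A t ih =>
    intro k j u hj ht
    simp only [TermB.subst]
    rw [ih (k+1) (j+1) _ (by omega) (fun n hn => by
      cases n with
      | zero => omega
      | succ n => exact ht n (by omega))]
  | app a b iha ihb =>
    intro k j u hj ht
    simp only [TermB.subst]
    rw [iha k j u hj (fun n hn => by have := ht n hn; simp [freeInB] at this; simp [this]),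
      ihb k j u hj (fun n hn => by have := ht n hn; simp [freeInB] at this; simp [this])]
  | pair a b iha ihb =>
    intro k j u hj ht
    simp only [TermB.subst]
    rw [iha k j u hj (fun n hn => by have := ht n hn; simp [freeInB] at this; simp [this]),
      ihb k j u hj (fun n hn => by have := ht n hn; simp [freeInB] at this; simp [this])]
  | proj b t ih =>
    intro k j u hj ht
    simp only [TermB.subst]
    rw [ih k j u hj (fun n hn => by have := ht n hn; simpa [freeInB] using this)]
  | efq A t ih =>
    intro k j u hj ht
    simp only [TermB.subst]
    rw [ih k j u hj (fun n hn => by have := ht n hn; simpa [freeInB] using this)]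
  | tt => intros; rfl
  | ff => intros; rfl
  | ite c a b ihc iha ihb =>
    intro k j u hj ht
    simp only [TermB.subst]
    rw [ihc k j u hj (fun n hn => by have := ht n hn; simp [freeInB] at this; simp [this]),
      iha k j u hj (fun n hn => by have := ht n hn; simp [freeInB] at this; simp [this]),
      ihb k j u hj (fun n hn => by have := ht n hn; simp [freeInB] at this; simp [this])]
  | parC A a b iha ihb =>
    intro k j u hj ht
    simp only [TermB.subst]
    rw [iha (k+1) (j+1) _ (by omega) (fun n hn => by
        cases n with
        | zero => omega
        | succ n => have := ht n (by omega); simp [freeInB] at this; simp [this]),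
      ihb (k+1) (j+1) _ (by omega) (fun n hn => by
        cases n with
        | zero => omega
        | succ n => have := ht n (by omega); simp [freeInB] at this; simp [this])]
  | par a b iha ihb =>
    intro k j u hj ht
    simp only [TermB.subst]
    rw [iha k j u hj (fun n hn => by have := ht n hn; simp [freeInB] at this; simp [this]),
      ihb k j u hj (fun n hn => by have := ht n hn; simp [freeInB] at this; simp [this])]

/-- A term typed in the empty context is closed. -/
lemma closed_of_typed {t A} (h : TypingB [] t A) : ∀ n, freeInB n t = false :=
  fun n => typed_free h n (by simp)

lemma rename_closed {t A} (h : TypingB [] t A) (f : Nat → Nat) :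
    t.rename f = t :=
  rename_id t 0 f (fun n hn => by omega) (fun n _ => closed_of_typed h n)

lemma subst_closed {t A} (h : TypingB [] t A) (j : Nat) (u : TermB) :
    TermB.subst j u t = t :=
  subst_id t 0 j u (by omega) (fun n _ => closed_of_typed h n)

/-- After the two β-steps, `O u v` becomes the parallel term. -/
lemma two_beta (S : FormulaB) (s : TermB) (hs : TypingB [] s S)
    {u v : TermB} {A B : FormulaB} (hu : TypingB [] u A) (hv : TypingB [] v B) :
    Relation.ReflTransGen RedB (.app (.app (parallelOr S s) u) v)
      (.parC (.conj .bool S)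
        (.ite u .tt (.efq .bool (.app (.var 0) (.pair .ff s))))
        (.ite v .tt (.proj false (.var 0)))) := by
  have step1 : RedB (.app (.app (parallelOr S s) u) v)
      (.app (.lam .bool (.parC (.conj .bool S)
        (.ite u .tt (.efq .bool (.app (.var 0) (.pair .ff s))))
        (.ite (.var 1) .tt (.proj false (.var 0))))) v) := by
    have h := RedB.appL (u := v) (RedB.beta (A := .bool)
      (t := (.lam .bool (.parC (.conj .bool S)
        (.ite (.var 2) .tt (.efq .bool (.app (.var 0) (.pair .ff s))))
        (.ite (.var 1) .tt (.proj false (.var 0)))))) (u := u))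
    simp only [TermB.subst, TermB.rename, rename_closed hu, subst_closed hu,
      subst_closed hs] at h
    simpa [parallelOr] using h
  have step2 : RedB (.app (.lam .bool (.parC (.conj .bool S)
        (.ite u .tt (.efq .bool (.app (.var 0) (.pair .ff s))))
        (.ite (.var 1) .tt (.proj false (.var 0))))) v)
      (.parC (.conj .bool S)
        (.ite u .tt (.efq .bool (.app (.var 0) (.pair .ff s))))
        (.ite v .tt (.proj false (.var 0)))) := by
    have h := RedB.beta (A := .bool)
      (t := (.parC (.conj .bool S)
        (.ite u .tt (.efq .bool (.app (.var 0) (.pair .ff s))))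
        (.ite (.var 1) .tt (.proj false (.var 0))))) (u := v)
    simp only [TermB.subst, TermB.rename, rename_closed hv, subst_closed hv,
      subst_closed hu, subst_closed hs] at h
    simpa using h
  exact (Relation.ReflTransGen.single step1).tail step2

/-- the term O is a parallel OR: O F F ↦* F, O u T ↦* T and
O T u ↦* T for every term u : Bool. -/
theorem parallel_or_correct (S : FormulaB) (s : TermB) (hs : TypingB [] s S) :
    Relation.ReflTransGen RedB
      (.app (.app (parallelOr S s) .ff) .ff) .ff ∧
    ∀ u, TypingB [] u .bool →
      Relation.ReflTransGen RedB (.app (.app (parallelOr S s) u) .tt) .tt ∧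
      Relation.ReflTransGen RedB (.app (.app (parallelOr S s) .tt) u) .tt := by
  constructor
  · -- O F F ↦* F
    refine (two_beta S s hs TypingB.ff TypingB.ff).trans ?_
    have s1 : RedB
        (.parC (.conj .bool S)
          (.ite .ff .tt (.efq .bool (.app (.var 0) (.pair .ff s))))
          (.ite .ff .tt (.proj false (.var 0))))
        (.parC (.conj .bool S)
          (.efq .bool (.app (.var 0) (.pair .ff s)))
          (.ite .ff .tt (.proj false (.var 0)))) := RedB.parCL RedB.iteF
    have s2 : RedB
        (.parC (.conj .bool S)
          (.efq .bool (.app (.var 0) (.pair .ff s)))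
          (.ite .ff .tt (.proj false (.var 0))))
        (.parC (.conj .bool S)
          (.efq .bool (.app (.var 0) (.pair .ff s)))
          (.proj false (.var 0))) := RedB.parCR RedB.iteF
    have s3 : RedB
        (.parC (.conj .bool S)
          (.efq .bool (.app (.var 0) (.pair .ff s)))
          (.proj false (.var 0)))
        (.proj false (.pair .ff s)) := by
      have h := RedB.basicCross (B := .conj .bool S)
        (CtxB.efq .bool CtxB.hole) (.pair .ff s) (.proj false (.var 0))
        (fun n _ => by simp [freeInB, closed_of_typed hs n])
      simp only [CtxB.fill, CtxB.depth, TermB.subst, TermB.rename,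
        rename_closed hs] at h
      simpa using h
    have s4 : RedB (TermB.proj false (.pair .ff s)) .ff := RedB.projL
    exact ((((Relation.ReflTransGen.single s1).tail s2).tail s3).tail s4)
  · intro u hu
    constructor
    · -- O u T ↦* T
      refine (two_beta S s hs hu TypingB.tt).trans ?_
      have s1 : RedB
          (.parC (.conj .bool S)
            (.ite u .tt (.efq .bool (.app (.var 0) (.pair .ff s))))
            (.ite .tt .tt (.proj false (.var 0))))
          (.parC (.conj .bool S)
            (.ite u .tt (.efq .bool (.app (.var 0) (.pair .ff s))))
            .tt) := RedB.parCR RedB.iteT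
      have s2 : RedB
          (.parC (.conj .bool S)
            (.ite u .tt (.efq .bool (.app (.var 0) (.pair .ff s))))
            .tt) .tt := by
        have h := RedB.simpR (B := .conj .bool S)
          (u := .ite u .tt (.efq .bool (.app (.var 0) (.pair .ff s))))
          (v := .tt) (by simp [freeInB])
        simpa [TermB.subst] using h
      exact (Relation.ReflTransGen.single s1).tail s2
    · -- O T u ↦* T
      refine (two_beta S s hs TypingB.tt hu).trans ?_
      have s1 : RedB
          (.parC (.conj .bool S)
            (.ite .tt .tt (.efq .bool (.app (.var 0) (.pair .ff s))))
            (.ite u .tt (.proj false (.var 0))))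
          (.parC (.conj .bool S) .tt
            (.ite u .tt (.proj false (.var 0)))) := RedB.parCL RedB.iteT
      have s2 : RedB
          (.parC (.conj .bool S) .tt
            (.ite u .tt (.proj false (.var 0)))) .tt := by
        have h := RedB.simpL (B := .conj .bool S) (u := .tt)
          (v := .ite u .tt (.proj false (.var 0))) (by simp [freeInB])
        simpa [TermB.subst] using h
      exact (Relation.ReflTransGen.single s1).tail s2
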